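/- A permutation class C satisfies C = C[C] (is closed under inflation) if and only if every basis element of C is simple. -/

import Mathlib

/-- A permutation of some finite length `n`, as a bijection of `Fin n`. -/
abbrev PPerm : Type := Σ n : ℕ, Equiv.Perm (Fin n)

/-- `Contains π σ` : the pattern `σ` occurs in (is contained in) `π`. -/
def Contains (π σ : PPerm) : Prop :=
  ∃ f : Fin σ.1 → Fin π.1, StrictMono f ∧
    ∀ i j, σ.2 i < σ.2 j ↔ π.2 (f i) < π.2 (f j)

/-- A permutation class: a set of permutations closed downwards under containment. -/
def IsPermClass (C : Set PPerm) : Prop :=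
  ∀ π ∈ C, ∀ σ : PPerm, Contains π σ → σ ∈ C

/-- `σ` is (exactly) the pattern of the set `S` of points of `π`. -/
def PatternOf (π : PPerm) (S : Set (Fin π.1)) (σ : PPerm) : Prop :=
  ∃ f : Fin σ.1 → Fin π.1, StrictMono f ∧ Set.range f = S ∧
    ∀ i j, σ.2 i < σ.2 j ↔ π.2 (f i) < π.2 (f j)

/-- The points of `π` lying in `S` contain an occurrence of `σ`. -/
def ContainsIn (π : PPerm) (S : Set (Fin π.1)) (σ : PPerm) : Prop :=
  ∃ f : Fin σ.1 → Fin π.1, StrictMono f ∧ (∀ i, f i ∈ S) ∧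
    ∀ i j, σ.2 i < σ.2 j ↔ π.2 (f i) < π.2 (f j)

/-- `π` is a merge of `σ` and `τ`: its points split into a part with pattern `σ`
and a part with pattern `τ`. -/
def IsMerge (π σ τ : PPerm) : Prop :=
  ∃ S : Set (Fin π.1), PatternOf π S σ ∧ PatternOf π Sᶜ τ

/-- Merge of two classes. -/
def MergeCl (C D : Set PPerm) : Set PPerm :=
  {π | ∃ σ ∈ C, ∃ τ ∈ D, IsMerge π σ τ}

/-- The empty permutation. -/
def pempty : PPerm := ⟨0, 1⟩

/-- The singleton permutation `1`. -/
def pone : PPerm := ⟨1, 1⟩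

/-- Iterated merge of a list of classes. -/
def MergeAll : List (Set PPerm) → Set PPerm
  | [] => {pempty}
  | [C] => C
  | C :: D :: Cs => MergeCl C (MergeAll (D :: Cs))

/-- A class is splittable if it is contained in the merge of finitely many
of its proper subclasses. -/
def Splittable (C : Set PPerm) : Prop :=
  ∃ Cs : List (Set PPerm), Cs ≠ [] ∧
    (∀ D ∈ Cs, IsPermClass D ∧ D ⊆ C ∧ D ≠ C) ∧ C ⊆ MergeAll Cs

/-- A class is atomic if it is not the union of two proper subclasses. -/
def Atomic (C : Set PPerm) : Prop :=
  ¬ ∃ D E : Set PPerm, IsPermClass D ∧ IsPermClass E ∧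
      D ⊆ C ∧ D ≠ C ∧ E ⊆ C ∧ E ≠ C ∧ C = D ∪ E

/-- Inflation `A[B]` of a class `A` by a class `B`: `π` decomposes into
consecutive nonempty blocks (given by the fibres of the monotone surjection `g`),
the relative order of distinct blocks follows `σ ∈ A`, and each block has its
pattern in `B`. -/
def Inflate (A B : Set PPerm) : Set PPerm :=
  {π | ∃ σ ∈ A, ∃ g : Fin π.1 → Fin σ.1, Monotone g ∧ Function.Surjective g ∧
    (∀ p q, g p ≠ g q → (π.2 p < π.2 q ↔ σ.2 (g p) < σ.2 (g q))) ∧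
    ∀ b : Fin σ.1, ∃ τ ∈ B, PatternOf π {p | g p = b} τ}

/-- Direct sum `σ ⊕ τ`. -/
def psum (σ τ : PPerm) : PPerm :=
  ⟨σ.1 + τ.1, finSumFinEquiv.permCongr (σ.2.sumCongr τ.2)⟩

/-- Skew sum `σ ⊖ τ`. -/
def pskew (σ τ : PPerm) : PPerm :=
  ⟨σ.1 + τ.1,
    finSumFinEquiv.symm.trans ((σ.2.sumCongr τ.2).trans
      ((Equiv.sumComm (Fin σ.1) (Fin τ.1)).trans
        (finSumFinEquiv.trans (finCongr (Nat.add_comm τ.1 σ.1)))))⟩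

/-- Sum-decomposable: a direct sum of two nonempty permutations. -/
def SumDecomp (π : PPerm) : Prop :=
  ∃ σ τ : PPerm, 0 < σ.1 ∧ 0 < τ.1 ∧ π = psum σ τ

/-- Skew-decomposable: a skew sum of two nonempty permutations. -/
def SkewDecomp (π : PPerm) : Prop :=
  ∃ σ τ : PPerm, 0 < σ.1 ∧ 0 < τ.1 ∧ π = pskew σ τ

def SumClosed (C : Set PPerm) : Prop := ∀ σ ∈ C, ∀ τ ∈ C, psum σ τ ∈ C

def SkewClosed (C : Set PPerm) : Prop := ∀ σ ∈ C, ∀ τ ∈ C, pskew σ τ ∈ C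

/-- The class of permutations avoiding the pattern `σ`. -/
def Av (σ : PPerm) : Set PPerm := {π | ¬ Contains π σ}

/-- The basis of a class: minimal permutations not belonging to it. -/
def PBasis (C : Set PPerm) : Set PPerm :=
  {π | π ∉ C ∧ ∀ σ : PPerm, Contains π σ → σ ≠ π → σ ∈ C}

/-- An interval of `π`: a set of points contiguous in positions and in values. -/
def IsInterval (π : PPerm) (S : Set (Fin π.1)) : Prop :=
  (∀ a ∈ S, ∀ b ∈ S, ∀ c, a ≤ c → c ≤ b → c ∈ S) ∧
  (∀ a ∈ S, ∀ b ∈ S, ∀ c, π.2 a ≤ π.2 c → π.2 c ≤ π.2 b → c ∈ S)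

/-- A simple permutation: its only intervals are the subsingletons and the whole. -/
def SimplePerm (π : PPerm) : Prop :=
  ∀ S : Set (Fin π.1), IsInterval π S → S.Subsingleton ∨ S = Set.univ

/-- Build a permutation from a function with an explicit inverse. -/
def mkP {n : ℕ} (f g : Fin n → Fin n)
    (h₁ : ∀ i, g (f i) = i) (h₂ : ∀ i, f (g i) = i) : PPerm :=
  ⟨n, ⟨f, g, h₁, h₂⟩⟩

def p12 : PPerm := ⟨2, 1⟩
def p21 : PPerm := mkP ![1,0] ![1,0] (by decide) (by decide)
def p213 : PPerm := mkP ![1,0,2] ![1,0,2] (by decide) (by decide)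
def p231 : PPerm := mkP ![1,2,0] ![2,0,1] (by decide) (by decide)
def p312 : PPerm := mkP ![2,0,1] ![1,2,0] (by decide) (by decide)
def p1234 : PPerm := ⟨4, 1⟩
def p2143 : PPerm := mkP ![1,0,3,2] ![1,0,3,2] (by decide) (by decide)
def p3412 : PPerm := mkP ![2,3,0,1] ![2,3,0,1] (by decide) (by decide)
def p4321 : PPerm := mkP ![3,2,1,0] ![3,2,1,0] (by decide) (by decide)
def p2413 : PPerm := mkP ![1,3,0,2] ![2,0,3,1] (by decide) (by decide)
def p3142 : PPerm := mkP ![2,0,3,1] ![1,3,0,2] (by decide) (by decide)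

/-- The class `I` of increasing permutations. -/
def IncCl : Set PPerm := Av p21
/-- The class `D` of decreasing permutations. -/
def DecCl : Set PPerm := Av p12
/-- The class `Av(213)`. -/
def Av213 : Set PPerm := Av p213
/-- The class `L = Av(231, 312)` of layered permutations. -/
def Layered : Set PPerm := Av p231 ∩ Av p312
/-- Separable permutations, characterised by avoidance of `2413` and `3142`. -/
def SepA : Set PPerm := Av p2413 ∩ Av p3142
/-- Separable permutations avoiding every element of `F`. -/
def Avs (F : Set PPerm) : Set PPerm := {π ∈ SepA | ∀ τ ∈ F, ¬ Contains π τ}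
/-- The class of separable permutations, defined as the smallest permutation class
containing `1` and closed under direct sums and skew sums. -/
def SepCl : Set PPerm :=
  ⋂₀ {C : Set PPerm | IsPermClass C ∧ pone ∈ C ∧
      ∀ σ ∈ C, ∀ τ ∈ C, psum σ τ ∈ C ∧ pskew σ τ ∈ C}
section Stmt9Helpers

lemma fin_strictMono_id {n : ℕ} (f : Fin n → Fin n) (hf : StrictMono f) : ∀ i, f i = i := by
  have hbij : Function.Bijective f := Finite.injective_iff_bijective.mp hf.injective
  have hfid : f = id := by
    have := (hf.range_inj (strictMono_id (α := Fin n))).mp ?_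
    · exact this
    · simp [Set.range_eq_univ.mpr hbij.surjective]
  intro i; rw [hfid]; rfl

lemma contains_refl (π : PPerm) : Contains π π :=
  ⟨id, strictMono_id, fun _ _ => Iff.rfl⟩

lemma contains_trans {π σ ρ : PPerm} (h1 : Contains π σ) (h2 : Contains σ ρ) :
    Contains π ρ := by
  obtain ⟨f, hf, hfp⟩ := h1
  obtain ⟨g, hg, hgp⟩ := h2
  exact ⟨f ∘ g, hf.comp hg, fun i j => (hgp i j).trans (hfp _ _)⟩

lemma contains_card {π σ : PPerm} (h : Contains π σ) : σ.1 ≤ π.1 := by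
  obtain ⟨f, hf, -⟩ := h
  simpa using Fintype.card_le_of_injective f hf.injective

lemma perm_pattern_ext {n : ℕ} (a b : Equiv.Perm (Fin n))
    (h : ∀ i j, a i < a j ↔ b i < b j) : a = b := by
  have he : StrictMono (fun x => b (a.symm x)) := by
    intro x y hxy
    exact (h (a.symm x) (a.symm y)).mp (by simpa using hxy)
  have hid := fin_strictMono_id _ he
  apply Equiv.ext
  intro i
  have h2 := hid (a i)
  simp only [Equiv.symm_apply_apply] at h2
  exact h2.symm

lemma contains_eq {π σ : PPerm} (h : Contains π σ) (hc : σ.1 = π.1) : σ = π := by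
  obtain ⟨n, a⟩ := π
  obtain ⟨m, b⟩ := σ
  dsimp at hc
  subst hc
  obtain ⟨f, hf, hp⟩ := h
  have hfi := fin_strictMono_id f hf
  have hab : ∀ i j, b i < b j ↔ a i < a j := by
    intro i j
    rw [hp i j, hfi i, hfi j]
  exact congrArg (Sigma.mk m) (perm_pattern_ext b a hab)

lemma exists_basis {C : Set PPerm} {π : PPerm} (hπ : π ∉ C) :
    ∃ β, β ∈ PBasis C ∧ Contains π β := by
  classical
  have hP : ∃ m : ℕ, ∃ β : PPerm, Contains π β ∧ β ∉ C ∧ β.1 = m :=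
    ⟨π.1, π, contains_refl π, hπ, rfl⟩
  obtain ⟨β, hβc, hβn, hβm⟩ := Nat.find_spec hP
  refine ⟨β, ⟨hβn, ?_⟩, hβc⟩
  intro ρ hρc hρne
  by_contra hρn
  have h1 : Nat.find hP ≤ ρ.1 :=
    Nat.find_min' hP ⟨ρ, contains_trans hβc hρc, hρn, rfl⟩
  have h2 : ρ.1 ≤ β.1 := contains_card hρc
  exact hρne (contains_eq hρc (by omega))

lemma fin_pone_eq (i j : Fin pone.1) : i = j := by
  have hi := i.isLt
  have hj := j.isLt
  have h1 : pone.1 = 1 := rfl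
  exact Fin.ext (by omega)

lemma contains_pone {π : PPerm} (h : 0 < π.1) : Contains π pone := by
  refine ⟨fun _ => ⟨0, h⟩, ?_, ?_⟩
  · intro i j hij
    have : i = j := fin_pone_eq i j
    subst this
    exact absurd hij (lt_irrefl _)
  · intro i j
    have : i = j := fin_pone_eq i j
    subst this
    simp

lemma patternOf_single (π : PPerm) (p : Fin π.1) : PatternOf π {p} pone := by
  refine ⟨fun _ => p, ?_, ?_, ?_⟩
  · intro i j hij
    have : i = j := fin_pone_eq i j
    subst this
    exact absurd hij (lt_irrefl _)
  · haveI : Nonempty (Fin pone.1) := ⟨⟨0, by simp [pone]⟩⟩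
    exact Set.range_const
  · intro i j
    have : i = j := fin_pone_eq i j
    subst this
    simp

lemma standardize {k n : ℕ} (v : Fin k → Fin n) (hv : Function.Injective v) :
    ∃ ρ : Equiv.Perm (Fin k), ∀ i j, ρ i < ρ j ↔ v i < v j := by
  classical
  set W : Finset (Fin n) := Finset.image v Finset.univ with hW
  have hcard : W.card = k := by
    rw [hW, Finset.card_image_of_injective _ hv, Finset.card_univ, Fintype.card_fin]
  let o : Fin k ≃o W := W.orderIsoOfFin hcard
  have hmem : ∀ i, v i ∈ W := fun i => Finset.mem_image_of_mem v (Finset.mem_univ i)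
  let e : Fin k → W := fun i => ⟨v i, hmem i⟩
  have he : Function.Bijective e := by
    constructor
    · intro i j hij
      exact hv (congrArg Subtype.val hij)
    · rintro ⟨w, hw⟩
      obtain ⟨i, -, hi⟩ := Finset.mem_image.mp hw
      exact ⟨i, Subtype.ext hi⟩
  refine ⟨(Equiv.ofBijective e he).trans o.symm.toEquiv, fun i j => ?_⟩
  show o.symm (e i) < o.symm (e j) ↔ _
  rw [o.symm.lt_iff_lt]
  exact Subtype.mk_lt_mk

lemma pattern_exists (π : PPerm) (S : Set (Fin π.1)) :
    ∃ σ : PPerm, σ.1 = S.toFinite.toFinset.card ∧ PatternOf π S σ := by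
  classical
  set s : Finset (Fin π.1) := S.toFinite.toFinset with hs
  set k := s.card with hk
  let f0 : Fin k ≃o s := s.orderIsoOfFin rfl
  let f : Fin k → Fin π.1 := fun i => (f0 i : Fin π.1)
  have hf : StrictMono f := fun i j hij => Subtype.coe_lt_coe.mpr (f0.lt_iff_lt.mpr hij)
  have hrange : Set.range f = S := by
    ext x
    constructor
    · rintro ⟨i, rfl⟩
      have : (f0 i : Fin π.1) ∈ s := (f0 i).2
      exact (S.toFinite.mem_toFinset).mp this
    · intro hx
      have hxs : x ∈ s := (S.toFinite.mem_toFinset).mpr hx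
      obtain ⟨i, hi⟩ := f0.surjective ⟨x, hxs⟩
      exact ⟨i, congrArg Subtype.val hi⟩
  have hvinj : Function.Injective (fun i => π.2 (f i)) :=
    fun i j hij => hf.injective (π.2.injective hij)
  obtain ⟨ρ, hρ⟩ := standardize (fun i => π.2 (f i)) hvinj
  exact ⟨⟨k, ρ⟩, rfl, f, hf, hrange, hρ⟩

lemma patternOf_contains {π σ : PPerm} {S : Set (Fin π.1)} (h : PatternOf π S σ) :
    Contains π σ := by
  obtain ⟨f, hf, -, hp⟩ := h
  exact ⟨f, hf, hp⟩

lemma contains_of_containsIn {π β τ : PPerm} {S : Set (Fin π.1)}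
    (h1 : ContainsIn π S β) (h2 : PatternOf π S τ) : Contains τ β := by
  obtain ⟨f, hf, hfS, hfp⟩ := h1
  obtain ⟨e, he, herange, hep⟩ := h2
  have hsel : ∀ i, ∃ j, e j = f i := by
    intro i
    have : f i ∈ Set.range e := by rw [herange]; exact hfS i
    exact this
  choose g hg using hsel
  refine ⟨g, ?_, ?_⟩
  · intro i j hij
    have h2' : e (g i) < e (g j) := by rw [hg, hg]; exact hf hij
    exact he.lt_iff_lt.mp h2'
  · intro i j
    rw [hfp i j, hep (g i) (g j), hg i, hg j]

lemma inflate_subset {C : Set PPerm} (hC : IsPermClass C)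
    (hs : ∀ π ∈ PBasis C, SimplePerm π) : Inflate C C ⊆ C := by
  intro π hπ
  by_contra hπC
  obtain ⟨σ, hσC, g, hgmono, hgsurj, hord, hblocks⟩ := hπ
  obtain ⟨β, hβB, hβc⟩ := exists_basis hπC
  obtain ⟨f, hf, hfp⟩ := hβc
  have hβsimple := hs β hβB
  set h : Fin β.1 → Fin σ.1 := g ∘ f with hh
  have hmono : Monotone h := hgmono.comp hf.monotone
  by_cases hinj : Function.Injective h
  · have hsm : StrictMono h := hmono.strictMono_of_injective hinj
    have hcont : Contains σ β := by
      refine ⟨h, hsm, fun i j => ?_⟩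
      rcases eq_or_ne i j with rfl | hne
      · simp
      · have hne' : g (f i) ≠ g (f j) := fun e => hne (hinj e)
        rw [hfp i j]
        exact hord (f i) (f j) hne'
    exact hβB.1 (hC σ hσC β hcont)
  · obtain ⟨i, j, hij, hne⟩ := Function.not_injective_iff.mp hinj
    set b := h i with hb
    set T : Set (Fin β.1) := {c | h c = b} with hT
    have hTi : IsInterval β T := by
      constructor
      · intro a ha a' ha' c hac hca
        have h1 : h a ≤ h c := hmono hac
        have h2 : h c ≤ h a' := hmono hca
        show h c = b
        exact le_antisymm (ha' ▸ h2) (ha ▸ h1)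
      · intro a ha a' ha' c hac hca
        show h c = b
        by_contra hcb
        rcases eq_or_ne a c with rfl | hac'
        · exact hcb ha
        rcases eq_or_ne c a' with rfl | hca'
        · exact hcb ha'
        have hlt1 : β.2 a < β.2 c := lt_of_le_of_ne hac (fun e => hac' (β.2.injective e))
        have hlt2 : β.2 c < β.2 a' := lt_of_le_of_ne hca (fun e => hca' (β.2.injective e))
        have hne1 : g (f a) ≠ g (f c) := by
          intro eq
          apply hcb
          show h c = b
          calc h c = g (f c) := rfl
          _ = g (f a) := eq.symm
          _ = h a := rfl
          _ = b := ha
        have hne2 : g (f c) ≠ g (f a') := by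
          intro eq
          apply hcb
          show h c = b
          calc h c = g (f c) := rfl
          _ = g (f a') := eq
          _ = h a' := rfl
          _ = b := ha'
        have hs1 : σ.2 (h a) < σ.2 (h c) :=
          (hord (f a) (f c) hne1).mp ((hfp a c).mp hlt1)
        have hs2 : σ.2 (h c) < σ.2 (h a') :=
          (hord (f c) (f a') hne2).mp ((hfp c a').mp hlt2)
        have hab : h a = h a' := ha.trans ha'.symm
        rw [hab] at hs1
        exact absurd (hs1.trans hs2) (lt_irrefl _)
    have hTns : ¬ T.Subsingleton := by
      intro hsub
      exact hne (hsub (show h i = b from rfl) (show h j = b from by rw [hb, ← hij]))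
    have hTuniv : T = Set.univ := (hβsimple T hTi).resolve_left hTns
    have hIn : ContainsIn π {p | g p = b} β := by
      refine ⟨f, hf, fun c => ?_, hfp⟩
      have : c ∈ T := hTuniv ▸ Set.mem_univ c
      exact this
    obtain ⟨τ, hτC, hτpat⟩ := hblocks b
    exact hβB.1 (hC τ hτC β (contains_of_containsIn hIn hτpat))

lemma subset_inflate {C : Set PPerm} (hC : IsPermClass C) : C ⊆ Inflate C C := by
  intro π hπ
  refine ⟨π, hπ, id, monotone_id, Function.surjective_id, fun _ _ _ => Iff.rfl, ?_⟩
  intro b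
  refine ⟨pone, hC π hπ pone (contains_pone b.pos), ?_⟩
  have : {p : Fin π.1 | id p = b} = {b} := by
    ext p; simp [eq_comm]
  rw [this]
  exact patternOf_single π b

lemma basis_simple {C : Set PPerm} (hC : IsPermClass C) (hI : Inflate C C = C) :
    ∀ π ∈ PBasis C, SimplePerm π := by
  intro π hπB
  by_contra hns
  unfold SimplePerm at hns
  push_neg at hns
  obtain ⟨S, hSI, hSsub, hSuniv⟩ := hns
  obtain ⟨x, hx, y, hy, hxy⟩ := hSsub
  obtain ⟨z, hz⟩ := Set.ne_univ_iff_exists_notMem S |>.mp hSuniv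
  have h2 : 1 < π.1 := by
    by_contra h
    push_neg at h
    exact hxy (Fin.ext (by omega))
  have hπnC := hπB.1
  have hπmin := hπB.2
  have hpone : pone ∈ C := by
    refine hπmin pone (contains_pone (by omega)) ?_
    intro h
    have := congrArg Sigma.fst h
    simp only [pone] at this
    omega
  obtain ⟨hpos, hval⟩ := hSI
  classical
  -- τ : pattern of S
  obtain ⟨τ, hτcard, hτpat⟩ := pattern_exists π S
  have hScard : S.toFinite.toFinset.card < π.1 := by
    have hss : S.toFinite.toFinset ⊂ Finset.univ := by
      refine Finset.ssubset_univ_iff.mpr ?_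
      intro h
      apply hz
      have : z ∈ S.toFinite.toFinset := h ▸ Finset.mem_univ z
      rwa [Set.Finite.mem_toFinset] at this
    have := Finset.card_lt_card hss
    simpa using this
  have hτC : τ ∈ C := by
    refine hπmin τ (patternOf_contains hτpat) ?_
    intro h
    rw [h] at hτcard
    omega
  -- σ' : pattern of T = Sᶜ ∪ {x}
  set T : Set (Fin π.1) := Sᶜ ∪ {x} with hTdef
  obtain ⟨σ', hσcard, hσpat⟩ := pattern_exists π T
  have hyT : y ∉ T := by
    intro h
    rcases h with h | h
    · exact h hy
    · exact hxy (Set.mem_singleton_iff.mp h).symm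
  have hTcard : T.toFinite.toFinset.card < π.1 := by
    have hss : T.toFinite.toFinset ⊂ Finset.univ := by
      refine Finset.ssubset_univ_iff.mpr ?_
      intro h
      apply hyT
      have : y ∈ T.toFinite.toFinset := h ▸ Finset.mem_univ y
      rwa [Set.Finite.mem_toFinset] at this
    have := Finset.card_lt_card hss
    simpa using this
  have hσC : σ' ∈ C := by
    refine hπmin σ' (patternOf_contains hσpat) ?_
    intro h
    rw [h] at hσcard
    omega
  obtain ⟨e, he, herange, hep⟩ := hσpat
  set proj : Fin π.1 → Fin π.1 := fun p => if p ∈ S then x else p with hproj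
  have hprojT : ∀ p, proj p ∈ T := by
    intro p
    by_cases hp : p ∈ S
    · simp only [hproj, if_pos hp]
      exact Or.inr rfl
    · simp only [hproj, if_neg hp]
      exact Or.inl hp
  have hsel : ∀ p, ∃ i, e i = proj p := by
    intro p
    have : proj p ∈ Set.range e := by rw [herange]; exact hprojT p
    exact this
  choose g hg using hsel
  have hginj_iff : ∀ p q, g p = g q ↔ proj p = proj q := by
    intro p q
    constructor
    · intro h; rw [← hg p, ← hg q, h]
    · intro h; exact he.injective (by rw [hg, hg, h])
  have hprojmono : Monotone proj := by
    intro p q hpq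
    by_cases hp : p ∈ S <;> by_cases hq : q ∈ S
    · simp only [hproj, if_pos hp, if_pos hq]; exact le_refl x
    · simp only [hproj, if_pos hp, if_neg hq]
      by_contra hcon
      push_neg at hcon
      exact hq (hpos p hp x hx q hpq (le_of_lt hcon))
    · simp only [hproj, if_neg hp, if_pos hq]
      by_contra hcon
      push_neg at hcon
      exact hp (hpos x hx q hq p (le_of_lt hcon) hpq)
    · simp only [hproj, if_neg hp, if_neg hq]; exact hpq
  have hgmono : Monotone g := by
    intro p q hpq
    by_contra hcon
    push_neg at hcon
    have h1 : e (g q) < e (g p) := he hcon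
    rw [hg, hg] at h1
    exact absurd h1 (not_lt.mpr (hprojmono hpq))
  have hgsurj : Function.Surjective g := by
    intro i
    have heiT : e i ∈ T := by rw [← herange]; exact Set.mem_range_self i
    by_cases hei : e i ∈ S
    · have hex : e i = x := by
        rcases heiT with h | h
        · exact absurd hei h
        · exact h
      refine ⟨x, he.injective ?_⟩
      rw [hg]
      simp only [hproj, if_pos hx]
      exact hex.symm
    · refine ⟨e i, he.injective ?_⟩
      rw [hg]
      simp only [hproj, if_neg hei]
  have hvalne : ∀ q, q ∉ S → ∀ a, a ∈ S → π.2 a ≠ π.2 q := by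
    intro q hq a ha h
    exact hq (π.2.injective h ▸ ha)
  have hvalcmp : ∀ q, q ∉ S → ∀ a, a ∈ S → ∀ b, b ∈ S → (π.2 a < π.2 q ↔ π.2 b < π.2 q) := by
    intro q hq a ha b hb
    constructor
    · intro h1
      by_contra h2
      push_neg at h2
      exact hq (hval a ha b hb q (le_of_lt h1) h2)
    · intro h1
      by_contra h2
      push_neg at h2
      exact hq (hval b hb a ha q (le_of_lt h1) h2)
  have hvalcmp' : ∀ q, q ∉ S → ∀ a, a ∈ S → ∀ b, b ∈ S → (π.2 q < π.2 a ↔ π.2 q < π.2 b) := by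
    intro q hq a ha b hb
    rw [← not_le, ← not_le]
    rw [(hvalne q hq a ha).le_iff_lt, (hvalne q hq b hb).le_iff_lt]
    exact not_congr (hvalcmp q hq a ha b hb)
  have hord : ∀ p q, g p ≠ g q → (π.2 p < π.2 q ↔ σ'.2 (g p) < σ'.2 (g q)) := by
    intro p q hne
    rw [hep (g p) (g q), hg p, hg q]
    have hprojne : proj p ≠ proj q := fun h => hne ((hginj_iff p q).mpr h)
    by_cases hp : p ∈ S <;> by_cases hq : q ∈ S
    · exact absurd (by simp only [hproj, if_pos hp, if_pos hq]) hprojne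
    · simp only [hproj, if_pos hp, if_neg hq]
      exact hvalcmp q hq p hp x hx
    · simp only [hproj, if_neg hp, if_pos hq]
      exact hvalcmp' p hp q hq x hx
    · simp only [hproj, if_neg hp, if_neg hq]
  have hblocks : ∀ b : Fin σ'.1, ∃ τ' ∈ C, PatternOf π {p | g p = b} τ' := by
    intro b
    have hebT : e b ∈ T := by rw [← herange]; exact Set.mem_range_self b
    by_cases hb : e b ∈ S
    · have hebx : e b = x := by
        rcases hebT with h | h
        · exact absurd hb h
        · exact h
      refine ⟨τ, hτC, ?_⟩
      have hfib : {p | g p = b} = S := by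
        ext p
        simp only [Set.mem_setOf_eq]
        constructor
        · intro h
          have hpp : proj p = x := by rw [← hg p, h, hebx]
          by_contra hpS
          simp only [hproj, if_neg hpS] at hpp
          exact hpS (hpp ▸ hx)
        · intro hpS
          apply he.injective
          rw [hg, hebx]
          simp only [hproj, if_pos hpS]
      rw [hfib]
      exact hτpat
    · refine ⟨pone, hpone, ?_⟩
      have hfib : {p | g p = b} = {e b} := by
        ext p
        simp only [Set.mem_setOf_eq, Set.mem_singleton_iff]
        constructor
        · intro h
          have hpp : proj p = e b := by rw [← hg p, h]
          by_cases hpS : p ∈ S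
          · simp only [hproj, if_pos hpS] at hpp
            exact absurd (hpp ▸ hx) hb
          · simpa only [hproj, if_neg hpS] using hpp
        · rintro rfl
          apply he.injective
          rw [hg]
          simp only [hproj, if_neg hb]
      rw [hfib]
      exact patternOf_single π (e b)
  have hmem : π ∈ Inflate C C := ⟨σ', hσC, g, hgmono, hgsurj, hord, hblocks⟩
  rw [hI] at hmem
  exact hπnC hmem

end Stmt9Helpers

/-- `C = C[C]` iff every basis element of `C` is simple. -/
theorem stmt9 (C : Set PPerm) (hC : IsPermClass C) :
    Inflate C C = C ↔ ∀ π ∈ PBasis C, SimplePerm π := by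
  constructor
  · exact basis_simple hC
  · intro hs
    exact Set.Subset.antisymm (inflate_subset hC hs) (subset_inflate hC)
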